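/- Let B be a finite-dimensional vector space over a field K of characteristic zero regarded as an abelian Lie algebra, and let w₁, w₂ : B × B → B* be nondegenerate cyclic skew-symmetric bilinear maps, with associated trilinear forms φ_{w₁}(x,y,z) = w₁(x,y)(z) and φ_{w₂}(x,y,z) = w₂(x,y)(z). Then the T*-extensions (T*_{w₁}B, q_B) and (T*_{w₂}B, q_B) are isometrically isomorphic if and only if there exists an invertible linear map σ : B → B such that φ_{w₁}(x,y,z) = φ_{w₂}(σ(x), σ(y), σ(z)) for all x,y,z ∈ B. -/

import Mathlib

open Module

variable {K B : Type*}

/-- The T*-extension bracket of an abelian Lie algebra: `[b+β, b'+β'] = w(b,b')`. -/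
def abelBr [Field K] [AddCommGroup B] [Module K B]
    (w : B →ₗ[K] B →ₗ[K] Module.Dual K B)
    (X Y : B × Module.Dual K B) : B × Module.Dual K B :=
  ((0 : B), w X.1 Y.1)

/-- The hyperbolic form `q_B(b+β, b'+β') = β(b') + β'(b)`. -/
def hypForm [Field K] [AddCommGroup B] [Module K B]
    (X Y : B × Module.Dual K B) : K :=
  X.2 Y.1 + Y.2 X.1

/-- For `B` an abelian Lie algebra and `w₁, w₂` nondegenerate cyclic skew-symmetric
bilinear maps, the T*-extensions `(T*_{w₁}B, q_B)` and `(T*_{w₂}B, q_B)` are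
isometrically isomorphic iff the associated trilinear forms are equivalent under
some `σ ∈ GL(B)`. -/
theorem stmt18 [Field K] [CharZero K] [AddCommGroup B] [Module K B] [FiniteDimensional K B]
    (w₁ w₂ : B →ₗ[K] B →ₗ[K] Module.Dual K B)
    (hcyc₁ : ∀ a b c : B, w₁ a b c = w₁ c a b ∧ w₁ c a b = w₁ b c a)
    (hskew₁ : ∀ a b : B, w₁ a b = - w₁ b a)
    (hnd₁ : ∀ b : B, (∀ b' : B, w₁ b b' = 0) → b = 0)
    (hcyc₂ : ∀ a b c : B, w₂ a b c = w₂ c a b ∧ w₂ c a b = w₂ b c a)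
    (hskew₂ : ∀ a b : B, w₂ a b = - w₂ b a)
    (hnd₂ : ∀ b : B, (∀ b' : B, w₂ b b' = 0) → b = 0) :
    (∃ g : (B × Module.Dual K B) ≃ₗ[K] (B × Module.Dual K B),
      (∀ X Y : B × Module.Dual K B, g (abelBr w₁ X Y) = abelBr w₂ (g X) (g Y)) ∧
      (∀ X Y : B × Module.Dual K B, hypForm (g X) (g Y) = hypForm X Y))
    ↔
    (∃ σ : B ≃ₗ[K] B, ∀ x y z : B, w₁ x y z = w₂ (σ x) (σ y) (σ z)) := by

  constructor
  · rintro ⟨g, hbr, hq⟩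
    set σ : B →ₗ[K] B :=
      (LinearMap.fst K B (Module.Dual K B)).comp
        (g.toLinearMap.comp (LinearMap.inl K B (Module.Dual K B))) with hσdef
    have hσ : ∀ b : B, σ b = (g (b, 0)).1 := fun _ => rfl
    have hfst : ∀ β : Module.Dual K B, (g ((0 : B), β)).1 = 0 := by
      intro β
      apply hnd₂
      intro b'
      have h := hbr ((0 : B), β) (g.symm (b', 0))
      have h1 : abelBr w₁ ((0 : B), β) (g.symm (b', 0)) = 0 := by
        simp [abelBr]
      rw [h1, map_zero, g.apply_symm_apply] at h
      have h2 : abelBr w₂ (g ((0 : B), β)) (b', 0) =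
          ((0 : B), w₂ (g ((0 : B), β)).1 b') := rfl
      rw [h2] at h
      exact (congrArg Prod.snd h).symm
    have hinj : Function.Injective σ := by
      rw [injective_iff_map_eq_zero]
      intro b hb
      apply hnd₁
      intro b'
      have h := hbr (b, 0) (b', 0)
      have h2 : abelBr w₂ (g (b, 0)) (g (b', 0)) =
          ((0 : B), w₂ (g ((b : B), (0 : Module.Dual K B))).1 (g (b', 0)).1) := rfl
      rw [h2, ← hσ b, hb, map_zero] at h
      have h3 : abelBr w₁ ((b : B), (0 : Module.Dual K B)) (b', 0) = (0, w₁ b b') := rfl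
      rw [h3] at h
      have h5 : ((0 : B), w₁ b b') = (0 : B × Module.Dual K B) := by
        apply g.injective
        rw [h, map_zero]
        rfl
      exact congrArg Prod.snd h5
    have hτ : ∀ (β : Module.Dual K B) (y : B), (g ((0 : B), β)).2 (σ y) = β y := by
      intro β y
      have h := hq ((0 : B), β) (y, 0)
      simp only [hypForm] at h
      rw [hfst β, map_zero, add_zero] at h
      rw [← hσ y] at h
      simpa using h
    have key : ∀ x y : B, (g ((0 : B), w₁ x y)).2 = w₂ (σ x) (σ y) := by
      intro x y
      have h := hbr (x, 0) (y, 0)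
      have h2 : abelBr w₂ (g (x, 0)) (g (y, 0)) =
          ((0 : B), w₂ (g ((x : B), (0 : Module.Dual K B))).1 (g (y, 0)).1) := rfl
      rw [h2, ← hσ x, ← hσ y] at h
      have h3 : abelBr w₁ ((x : B), (0 : Module.Dual K B)) (y, 0) = (0, w₁ x y) := rfl
      rw [h3] at h
      exact congrArg Prod.snd h
    refine ⟨LinearEquiv.ofInjectiveEndo σ hinj, ?_⟩
    intro x y z
    have e : ∀ a, (LinearEquiv.ofInjectiveEndo σ hinj) a = σ a := fun _ => rfl
    rw [e, e, e, ← key x y, hτ (w₁ x y) z]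
  · rintro ⟨σ, h⟩
    refine ⟨σ.prodCongr σ.symm.dualMap, ?_, ?_⟩
    · intro X Y
      have h1 : (σ.prodCongr σ.symm.dualMap) (abelBr w₁ X Y) =
          (σ 0, σ.symm.dualMap (w₁ X.1 Y.1)) := rfl
      have h2 : abelBr w₂ ((σ.prodCongr σ.symm.dualMap) X) ((σ.prodCongr σ.symm.dualMap) Y) =
          ((0 : B), w₂ (σ X.1) (σ Y.1)) := rfl
      rw [h1, h2, map_zero]
      refine Prod.ext rfl ?_
      ext z
      have : (σ.symm.dualMap (w₁ X.1 Y.1)) z = w₁ X.1 Y.1 (σ.symm z) := rfl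
      rw [this, h X.1 Y.1 (σ.symm z), σ.apply_symm_apply]
    · intro X Y
      simp only [hypForm, LinearEquiv.prodCongr_apply, LinearEquiv.dualMap_apply,
        σ.symm_apply_apply]
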